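/- Let V ∈ B^q(ℝ^n) be a reverse Hölder weight with exponent q ≥ 1 and constant ⟦V⟧_q. Suppose Q and Q̃ are cubes with Q̃ ⊆ Q, such that l(Q)^2 ⨍_Q V ≤ 1 and l(Q̃)^2 ⨍_{Q̃} V > 1. If q > n/2, then l(Q) < ⟦V⟧_q^{1/(2 - n/q)} · l(Q̃). -/

import Mathlib

open MeasureTheory

/-- The (axis-parallel, half-open) cube in `ℝ^n` with lower corner `c` and side-length `l`. -/
def cube (n : ℕ) (c : Fin n → ℝ) (l : ℝ) : Set (Fin n → ℝ) :=
  {x | ∀ i, c i ≤ x i ∧ x i < c i + l}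

lemma cube_eq_pi (n : ℕ) (c : Fin n → ℝ) (l : ℝ) :
    cube n c l = Set.univ.pi fun i => Set.Ico (c i) (c i + l) := by
  ext x; simp [cube, Set.mem_pi]

lemma cube_volume (n : ℕ) (c : Fin n → ℝ) (l : ℝ) (hl : 0 ≤ l) :
    volume (cube n c l) = ENNReal.ofReal (l ^ n) := by
  rw [cube_eq_pi, volume_pi_pi]
  simp [Real.volume_Ico, ← ENNReal.ofReal_pow hl]

lemma cube_average (n : ℕ) (c : Fin n → ℝ) (l : ℝ) (hl : 0 < l)
    (V : (Fin n → ℝ) → ℝ) :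
    (⨍ x in cube n c l, V x) = (l ^ n)⁻¹ * ∫ x in cube n c l, V x := by
  rw [setAverage_eq, measureReal_def, cube_volume n c l hl.le, ENNReal.toReal_ofReal (by positivity)]
  simp [smul_eq_mul]

/-- Let `V ∈ B^q(ℝ^n)` be a reverse Hölder weight with exponent `q ≥ 1` and
constant `K = ⟦V⟧_q`. Suppose `Q, Q̃` are cubes with `Q̃ ⊆ Q`, `l(Q)² ⨍_Q V ≤ 1` and
`l(Q̃)² ⨍_{Q̃} V > 1`. If `q > n/2`, then `l(Q) < K^{1/(2 - n/q)} l(Q̃)`. -/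
theorem stmt_2 (n : ℕ) (q K : ℝ) (hq1 : 1 ≤ q) (hqn : (n : ℝ) / 2 < q) (hK : 1 ≤ K)
    (V : (Fin n → ℝ) → ℝ) (hV0 : ∀ x, 0 ≤ V x)
    (hVloc : ∀ (c : Fin n → ℝ) (l : ℝ), 0 < l → IntegrableOn V (cube n c l) volume)
    (hVq : ∀ (c : Fin n → ℝ) (l : ℝ), 0 < l →
      IntegrableOn (fun x => V x ^ q) (cube n c l) volume)
    (hRH : ∀ (c : Fin n → ℝ) (l : ℝ), 0 < l →
      (⨍ x in cube n c l, V x ^ q) ^ (1 / q) ≤ K * ⨍ x in cube n c l, V x)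
    (c c' : Fin n → ℝ) (l l' : ℝ) (hl : 0 < l) (hl' : 0 < l')
    (hsub : cube n c' l' ⊆ cube n c l)
    (hsmall : l ^ 2 * ⨍ x in cube n c l, V x ≤ 1)
    (hbig : 1 < l' ^ 2 * ⨍ x in cube n c' l', V x) :
    l < K ^ (1 / (2 - (n : ℝ) / q)) * l' := by
  have hq0 : 0 < q := lt_of_lt_of_le one_pos hq1
  set A : ℝ := ⨍ x in cube n c l, V x with hA
  set A' : ℝ := ⨍ x in cube n c' l', V x with hA'
  set M : ℝ := ⨍ x in cube n c l, V x ^ q with hM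
  set M' : ℝ := ⨍ x in cube n c' l', V x ^ q with hM'
  have hA'0 : 0 ≤ A' := by
    rw [hA', setAverage_eq]
    have : 0 ≤ ∫ x in cube n c' l', V x :=
      setIntegral_nonneg (by rw [cube_eq_pi]; exact .univ_pi fun i => measurableSet_Ico)
        fun x _ => hV0 x
    positivity
  have hM0 : 0 ≤ M := by
    rw [hM, setAverage_eq]
    have : 0 ≤ ∫ x in cube n c l, V x ^ q :=
      setIntegral_nonneg (by rw [cube_eq_pi]; exact .univ_pi fun i => measurableSet_Ico)
        fun x _ => Real.rpow_nonneg (hV0 x) q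
    positivity
  -- Jensen: A' ^ q ≤ M'
  set μ := volume.restrict (cube n c' l') with hμ
  have hμuniv : μ Set.univ = ENNReal.ofReal (l' ^ n) := by
    rw [hμ, Measure.restrict_apply_univ, cube_volume n c' l' hl'.le]
  haveI : IsFiniteMeasure μ := ⟨by rw [hμuniv]; exact ENNReal.ofReal_lt_top⟩
  haveI : NeZero μ := by
    refine ⟨fun h => ?_⟩
    rw [h, Measure.coe_zero, Pi.zero_apply] at hμuniv
    have : (0:ℝ) < l' ^ n := by positivity
    simp [ENNReal.ofReal_eq_zero] at hμuniv
    linarith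
  have hjensen : A' ^ q ≤ M' := by
    have := (convexOn_rpow hq1).map_average_le
      (f := V) (μ := μ)
      (fun x _ => (Real.continuousAt_rpow_const x q (Or.inr hq0.le)).continuousWithinAt)
      isClosed_Ici (Filter.Eventually.of_forall fun x => hV0 x)
      (hVloc c' l' hl') (hVq c' l' hl')
    exact this
  -- M' ≤ (l/l')^n * M
  set r : ℝ := l / l' with hr
  have hr0 : 0 < r := div_pos hl hl'
  have hMM : M' ≤ r ^ n * M := by
    rw [hM, hM', cube_average n c l hl, cube_average n c' l' hl']
    have hle : (∫ x in cube n c' l', V x ^ q) ≤ ∫ x in cube n c l, V x ^ q :=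
      setIntegral_mono_set (hVq c l hl)
        (Filter.Eventually.of_forall fun x => Real.rpow_nonneg (hV0 x) q)
        (Filter.Eventually.of_forall hsub)
    have hrn : (l' ^ n)⁻¹ = r ^ n * (l ^ n)⁻¹ := by
      rw [hr, div_pow]
      field_simp
    rw [hrn, mul_assoc]
    exact mul_le_mul_of_nonneg_left (mul_le_mul_of_nonneg_left hle (by positivity))
      (by positivity)
  -- A' ≤ r^(n/q) * K * A
  have hA'le : A' ≤ r ^ ((n : ℝ) / q) * (K * A) := by
    have h1 : A' ≤ M' ^ (1 / q) := by
      have h2 : (A' ^ q) ^ (1 / q) ≤ M' ^ (1 / q) :=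
        Real.rpow_le_rpow (Real.rpow_nonneg hA'0 q) hjensen (by positivity)
      rwa [← Real.rpow_mul hA'0, mul_one_div, div_self hq0.ne', Real.rpow_one] at h2
    have h3 : M' ^ (1 / q) ≤ (r ^ n * M) ^ (1 / q) := by
      refine Real.rpow_le_rpow ?_ hMM (by positivity)
      calc (0:ℝ) ≤ A' ^ q := Real.rpow_nonneg hA'0 q
        _ ≤ M' := hjensen
    have h4 : (r ^ n * M) ^ (1 / q) = r ^ ((n : ℝ) / q) * M ^ (1 / q) := by
      rw [Real.mul_rpow (by positivity) hM0, ← Real.rpow_natCast r n,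
        ← Real.rpow_mul hr0.le, mul_one_div]
    calc A' ≤ (r ^ n * M) ^ (1 / q) := h1.trans h3
      _ = r ^ ((n : ℝ) / q) * M ^ (1 / q) := h4
      _ ≤ r ^ ((n : ℝ) / q) * (K * A) :=
        mul_le_mul_of_nonneg_left (hRH c l hl) (by positivity)
  -- combine
  set p : ℝ := (n : ℝ) / q with hp
  have hp2 : p < 2 := by
    rw [hp, div_lt_iff₀ hq0]; linarith
  have hp0 : 0 ≤ p := by positivity
  have key : r ^ (2 - p) < K := by
    have h5 : 1 < l' ^ 2 * (r ^ p * (K * A)) :=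
      lt_of_lt_of_le hbig (by
        exact mul_le_mul_of_nonneg_left hA'le (by positivity))
    have hK0 : (0:ℝ) < K := lt_of_lt_of_le one_pos hK
    have hC0 : 0 ≤ K * r ^ p * l' ^ 2 := by positivity
    have h6 : l ^ 2 * 1 < l ^ 2 * (l' ^ 2 * (r ^ p * (K * A))) :=
      mul_lt_mul_of_pos_left h5 (pow_pos hl 2)
    have h6' : l ^ 2 * (l' ^ 2 * (r ^ p * (K * A))) = (K * r ^ p * l' ^ 2) * (l ^ 2 * A) := by
      ring
    have h7 : l ^ 2 < K * r ^ p * l' ^ 2 := by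
      calc l ^ 2 = l ^ 2 * 1 := (mul_one _).symm
        _ < (K * r ^ p * l' ^ 2) * (l ^ 2 * A) := by rw [← h6']; exact h6
        _ ≤ (K * r ^ p * l' ^ 2) * 1 := mul_le_mul_of_nonneg_left hsmall hC0
        _ = K * r ^ p * l' ^ 2 := mul_one _
    have hrp : 0 < r ^ p := Real.rpow_pos_of_pos hr0 p
    have h8 : r ^ (2:ℝ) < K * r ^ p := by
      rw [Real.rpow_two, hr, div_pow]
      rw [div_lt_iff₀ (by positivity)]
      linarith [h7]
    rw [Real.rpow_sub hr0]
    rw [div_lt_iff₀ hrp]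
    exact h8
  have h2p : 0 < 2 - p := by linarith
  have hfin : r < K ^ (1 / (2 - p)) := by
    have := Real.rpow_lt_rpow (Real.rpow_nonneg hr0.le _) key (by positivity : (0:ℝ) < 1 / (2 - p))
    rwa [← Real.rpow_mul hr0.le, mul_one_div, div_self h2p.ne', Real.rpow_one] at this
  calc l = r * l' := by rw [hr, div_mul_cancel₀ _ hl'.ne']
    _ < K ^ (1 / (2 - p)) * l' := by
      exact mul_lt_mul_of_pos_right hfin hl'
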